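/- Let 1 ≤ n' < n be integers and let u ∈ ℝ^{n'}. Set ũ_i = u_i · ∏_{j=1}^{i−1} (1+u_j²)^{1/2}, and let L be the n×n real matrix with ones on the diagonal, with L_{n,i} = ũ_i for 1 ≤ i ≤ n', and with all other entries zero. Define the upper-triangular unipotent matrix x† with ones on the diagonal, entries x†_{i,j} = −u_i u_j · ∏_{l=i}^{j−1} (1+u_l²)^{−1/2} for 1 ≤ i < j ≤ n', entries x†_{i,n} = u_i · ∏_{j=1}^{n'} (1+u_j²)^{−1/2} · ∏_{j=i}^{n'} (1+u_j²)^{−1/2} for 1 ≤ i ≤ n', and all other off-diagonal entries zero. Let y† = ŷ_{n,1}(u₁)·ŷ_{n,2}(u₂)⋯ŷ_{n,n'}(u_{n'}) and k† = k̂_{n,n'}(u_{n'})·k̂_{n,n'−1}(u_{n'−1})⋯k̂_{n,1}(u₁). Then L = x† · y† · k†, the matrix y† is diagonal with positive diagonal entries, and k† is orthogonal. -/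

import Mathlib

/-- `ŷ_{n,i}(x)` with 1-based index `i`: the diagonal matrix whose `(i,i)` entry is
`(1+x²)^{−1/2}`, whose `(n,n)` entry is `(1+x²)^{1/2}`, and whose other diagonal
entries are 1. -/
noncomputable def yhatE (n i : ℕ) (x : ℝ) : Matrix (Fin n) (Fin n) ℝ :=
  Matrix.diagonal fun j => if (j : ℕ) + 1 = i then (Real.sqrt (1 + x ^ 2))⁻¹
    else if (j : ℕ) + 1 = n then Real.sqrt (1 + x ^ 2) else 1

/-- `k̂_{n,i}(x)` with 1-based index `i`: agrees with the identity except that its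
`(i,i)` and `(n,n)` entries are `(1+x²)^{−1/2}`, its `(i,n)` entry is
`−x(1+x²)^{−1/2}`, and its `(n,i)` entry is `x(1+x²)^{−1/2}`. -/
noncomputable def khatE (n i : ℕ) (x : ℝ) : Matrix (Fin n) (Fin n) ℝ :=
  Matrix.of fun a b =>
    if (a : ℕ) + 1 = i ∧ (b : ℕ) + 1 = i then (Real.sqrt (1 + x ^ 2))⁻¹
    else if (a : ℕ) + 1 = n ∧ (b : ℕ) + 1 = n then (Real.sqrt (1 + x ^ 2))⁻¹
    else if (a : ℕ) + 1 = i ∧ (b : ℕ) + 1 = n then -x * (Real.sqrt (1 + x ^ 2))⁻¹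
    else if (a : ℕ) + 1 = n ∧ (b : ℕ) + 1 = i then x * (Real.sqrt (1 + x ^ 2))⁻¹
    else if a = b then 1 else 0

/-- The matrix `L`: ones on the diagonal, bottom-row entries
`L_{n,i} = ũ_i = u_i·∏_{j=1}^{i−1}(1+u_j²)^{1/2}` for `1 ≤ i ≤ n'` (1-based), and
all other entries zero.  (`u : ℕ → ℝ` is used with 1-based indices `u 1, …, u n'`.) -/
noncomputable def bottomRow (n n' : ℕ) (u : ℕ → ℝ) : Matrix (Fin n) (Fin n) ℝ :=
  Matrix.of fun a b =>
    if a = b then 1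
    else if (a : ℕ) + 1 = n ∧ (b : ℕ) + 1 ≤ n' then
      u ((b : ℕ) + 1) * ∏ j ∈ Finset.Icc 1 (b : ℕ), Real.sqrt (1 + u j ^ 2)
    else 0

/-- The upper-triangular unipotent matrix `x†`: ones on the diagonal,
`x†_{i,j} = −u_i u_j ∏_{l=i}^{j−1}(1+u_l²)^{−1/2}` for `1 ≤ i < j ≤ n'`,
`x†_{i,n} = u_i ∏_{j=1}^{n'}(1+u_j²)^{−1/2} ∏_{j=i}^{n'}(1+u_j²)^{−1/2}` for
`1 ≤ i ≤ n'`, and all other off-diagonal entries zero (1-based indices). -/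
noncomputable def xdagger (n n' : ℕ) (u : ℕ → ℝ) : Matrix (Fin n) (Fin n) ℝ :=
  Matrix.of fun a b =>
    if a = b then 1
    else if (a : ℕ) < (b : ℕ) ∧ (b : ℕ) + 1 ≤ n' then
      -(u ((a : ℕ) + 1) * u ((b : ℕ) + 1))
        * ∏ l ∈ Finset.Icc ((a : ℕ) + 1) (b : ℕ), (Real.sqrt (1 + u l ^ 2))⁻¹
    else if (b : ℕ) + 1 = n ∧ (a : ℕ) + 1 ≤ n' then
      u ((a : ℕ) + 1) * (∏ j ∈ Finset.Icc 1 n', (Real.sqrt (1 + u j ^ 2))⁻¹)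
        * ∏ j ∈ Finset.Icc ((a : ℕ) + 1) n', (Real.sqrt (1 + u j ^ 2))⁻¹
    else 0

/-- `y† = ŷ_{n,1}(u₁)·ŷ_{n,2}(u₂)⋯ŷ_{n,n'}(u_{n'})`. -/
noncomputable def ydagger (n n' : ℕ) (u : ℕ → ℝ) : Matrix (Fin n) (Fin n) ℝ :=
  ((List.range n').map fun i => yhatE n (i + 1) (u (i + 1))).prod

/-- `k† = k̂_{n,n'}(u_{n'})·k̂_{n,n'−1}(u_{n'−1})⋯k̂_{n,1}(u₁)`. -/
noncomputable def kdagger (n n' : ℕ) (u : ℕ → ℝ) : Matrix (Fin n) (Fin n) ℝ :=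
  ((List.range n').map fun i => khatE n (n' - i) (u (n' - i))).prod



lemma one_add_sq_pos (x : ℝ) : (0:ℝ) < 1 + x ^ 2 := by positivity
lemma sqrtS_pos (x : ℝ) : 0 < Real.sqrt (1 + x ^ 2) := Real.sqrt_pos.2 (one_add_sq_pos x)
lemma sqrtS_ne (x : ℝ) : Real.sqrt (1 + x ^ 2) ≠ 0 := (sqrtS_pos x).ne'
lemma sqrtS_sq (x : ℝ) : Real.sqrt (1 + x ^ 2) ^ 2 = 1 + x ^ 2 := Real.sq_sqrt (one_add_sq_pos x).le

section khatE_eval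
variable {n i : ℕ} {x : ℝ} {a b : Fin n}

lemma khatE_ii (hai : (a:ℕ)+1 = i) (hbi : (b:ℕ)+1 = i) :
    khatE n i x a b = (Real.sqrt (1 + x ^ 2))⁻¹ := by
  simp only [khatE, Matrix.of_apply]; rw [if_pos ⟨hai, hbi⟩]

lemma khatE_nn (h2 : i < n) (han : (a:ℕ)+1 = n) (hbn : (b:ℕ)+1 = n) :
    khatE n i x a b = (Real.sqrt (1 + x ^ 2))⁻¹ := by
  simp only [khatE, Matrix.of_apply]
  rw [if_neg (by omega), if_pos ⟨han, hbn⟩]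

lemma khatE_in (h2 : i < n) (hai : (a:ℕ)+1 = i) (hbn : (b:ℕ)+1 = n) :
    khatE n i x a b = -x * (Real.sqrt (1 + x ^ 2))⁻¹ := by
  simp only [khatE, Matrix.of_apply]
  rw [if_neg (by omega), if_neg (by omega), if_pos ⟨hai, hbn⟩]

lemma khatE_ni (h2 : i < n) (han : (a:ℕ)+1 = n) (hbi : (b:ℕ)+1 = i) :
    khatE n i x a b = x * (Real.sqrt (1 + x ^ 2))⁻¹ := by
  simp only [khatE, Matrix.of_apply]
  rw [if_neg (by omega), if_neg (by omega), if_neg (by omega), if_pos ⟨han, hbi⟩]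

lemma khatE_row (hai : (a:ℕ)+1 ≠ i) (han : (a:ℕ)+1 ≠ n) :
    khatE n i x a b = if a = b then 1 else 0 := by
  simp only [khatE, Matrix.of_apply]
  rw [if_neg (by omega), if_neg (by omega), if_neg (by omega), if_neg (by omega)]

lemma khatE_col (hbi : (b:ℕ)+1 ≠ i) (hbn : (b:ℕ)+1 ≠ n) :
    khatE n i x a b = if a = b then 1 else 0 := by
  simp only [khatE, Matrix.of_apply]
  rw [if_neg (by omega), if_neg (by omega), if_neg (by omega), if_neg (by omega)]

end khatE_eval

lemma mul_khatE (n i : ℕ) (h1 : 1 ≤ i) (h2 : i < n) (x : ℝ) (M : Matrix (Fin n) (Fin n) ℝ)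
    (a b : Fin n) :
    (M * khatE n i x) a b =
      if (b:ℕ) + 1 = i then
        (M a ⟨i-1, by omega⟩ + x * M a ⟨n-1, by omega⟩) * (Real.sqrt (1+x^2))⁻¹
      else if (b:ℕ) + 1 = n then
        (M a ⟨n-1, by omega⟩ - x * M a ⟨i-1, by omega⟩) * (Real.sqrt (1+x^2))⁻¹
      else M a b := by
  set i0 : Fin n := ⟨i-1, by omega⟩ with hi0
  set n0 : Fin n := ⟨n-1, by omega⟩ with hn0
  have hi0v : (i0:ℕ) + 1 = i := by simp [hi0]; omega
  have hn0v : (n0:ℕ) + 1 = n := by simp [hn0]; omega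
  have hne : i0 ≠ n0 := by simp [hi0, hn0, Fin.ext_iff]; omega
  rw [Matrix.mul_apply]
  by_cases hbi : (b:ℕ) + 1 = i
  · rw [if_pos hbi,
      Finset.sum_eq_add_of_mem i0 n0 (Finset.mem_univ _) (Finset.mem_univ _) hne ?_]
    · rw [khatE_ii hi0v hbi, khatE_ni h2 hn0v hbi]; ring
    · intro c _ hc
      have hci : (c:ℕ)+1 ≠ i := fun h => hc.1 (Fin.ext (by omega))
      have hcn : (c:ℕ)+1 ≠ n := fun h => hc.2 (Fin.ext (by omega))
      rw [khatE_row hci hcn, if_neg (fun h : c = b => hci (by rw [h]; exact hbi)), mul_zero]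
  · rw [if_neg hbi]
    by_cases hbn : (b:ℕ) + 1 = n
    · rw [if_pos hbn,
        Finset.sum_eq_add_of_mem n0 i0 (Finset.mem_univ _) (Finset.mem_univ _) hne.symm ?_]
      · rw [khatE_nn h2 hn0v hbn, khatE_in h2 hi0v hbn]; ring
      · intro c _ hc
        have hci : (c:ℕ)+1 ≠ i := fun h => hc.2 (Fin.ext (by omega))
        have hcn : (c:ℕ)+1 ≠ n := fun h => hc.1 (Fin.ext (by omega))
        rw [khatE_row hci hcn, if_neg (fun h : c = b => hcn (by rw [h]; exact hbn)), mul_zero]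
    · rw [if_neg hbn, Finset.sum_eq_single b]
      · rw [khatE_col hbi hbn, if_pos rfl, mul_one]
      · intro c _ hc
        rw [khatE_col hbi hbn, if_neg hc, mul_zero]
      · intro h; exact absurd (Finset.mem_univ b) h

open Matrix in
lemma khatE_orth (n i : ℕ) (h1 : 1 ≤ i) (h2 : i < n) (x : ℝ) :
    (khatE n i x)ᵀ * khatE n i x = 1 := by
  have hx := sqrtS_ne x
  have hs := sqrtS_sq x
  ext a b
  rw [mul_khatE n i h1 h2]
  set i0 : Fin n := ⟨i-1, by omega⟩ with hi0
  set n0 : Fin n := ⟨n-1, by omega⟩ with hn0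
  have hi0v : (i0:ℕ) + 1 = i := by simp [hi0]; omega
  have hn0v : (n0:ℕ) + 1 = n := by simp [hn0]; omega
  simp only [Matrix.transpose_apply]
  by_cases hbi : (b:ℕ) + 1 = i
  · rw [if_pos hbi]
    have hb : b = i0 := Fin.ext (by omega)
    by_cases hai : (a:ℕ) + 1 = i
    · have ha : a = i0 := Fin.ext (by omega)
      rw [khatE_ii hi0v hai, khatE_ni h2 hn0v hai, ha, hb, Matrix.one_apply_eq]
      field_simp
      nlinarith [sqrtS_sq x]
    · by_cases han : (a:ℕ) + 1 = n
      · rw [khatE_in h2 hi0v han, khatE_nn h2 hn0v han,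
          Matrix.one_apply_ne (by rw [hb]; exact fun h => hai (by rw [h]; exact hi0v))]
        ring
      · rw [khatE_col hai han, khatE_col hai han,
          if_neg (fun h : i0 = a => hai (by rw [← h]; exact hi0v)),
          if_neg (fun h : n0 = a => han (by rw [← h]; exact hn0v)),
          Matrix.one_apply_ne (by rw [hb]; exact fun h => hai (by rw [h]; exact hi0v))]
        ring
  · rw [if_neg hbi]
    by_cases hbn : (b:ℕ) + 1 = n
    · rw [if_pos hbn]
      have hb : b = n0 := Fin.ext (by omega)
      by_cases hai : (a:ℕ) + 1 = i
      · rw [khatE_ni h2 hn0v hai, khatE_ii hi0v hai,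
          Matrix.one_apply_ne (show a ≠ b by rw [hb]; intro h; rw [h] at hai; omega)]
        ring
      · by_cases han : (a:ℕ) + 1 = n
        · have ha : a = n0 := Fin.ext (by omega)
          rw [khatE_nn h2 hn0v han, khatE_in h2 hi0v han, ha, hb, Matrix.one_apply_eq]
          field_simp
          nlinarith [sqrtS_sq x]
        · rw [khatE_col hai han, khatE_col hai han,
            if_neg (fun h : n0 = a => han (by rw [← h]; exact hn0v)),
            if_neg (fun h : i0 = a => hai (by rw [← h]; exact hi0v)),
            Matrix.one_apply_ne (by rw [hb]; exact fun h => han (by rw [h]; exact hn0v))]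
          ring
    · rw [if_neg hbn, khatE_row hbi hbn]
      by_cases hab : a = b
      · rw [hab, if_pos rfl, Matrix.one_apply_eq]
      · rw [if_neg (fun h : b = a => hab h.symm), Matrix.one_apply_ne hab]

lemma ydagger_succ (n m : ℕ) (u : ℕ → ℝ) :
    ydagger n (m+1) u = ydagger n m u * yhatE n (m+1) (u (m+1)) := by
  simp [ydagger, List.range_succ]

lemma kdagger_succ (n m : ℕ) (u : ℕ → ℝ) :
    kdagger n (m+1) u = khatE n (m+1) (u (m+1)) * kdagger n m u := by
  unfold kdagger
  rw [List.range_succ_eq_map, List.map_cons, List.map_map, List.prod_cons]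
  have h : ((fun i => khatE n (m + 1 - i) (u (m + 1 - i))) ∘ Nat.succ)
      = fun i => khatE n (m - i) (u (m - i)) := by
    funext i; simp [Nat.succ_sub_succ]
  rw [h]
  norm_num

open Matrix in
lemma kdagger_orth (n : ℕ) (u : ℕ → ℝ) : ∀ m, m < n → (kdagger n m u)ᵀ * kdagger n m u = 1 := by
  intro m
  induction m with
  | zero => intro _; simp [kdagger]
  | succ m ih =>
      intro h
      have h1 := khatE_orth n (m+1) (by omega) h (u (m+1))
      rw [kdagger_succ, Matrix.transpose_mul, Matrix.mul_assoc,
        ← Matrix.mul_assoc (khatE n (m+1) (u (m+1)))ᵀ, h1, Matrix.one_mul, ih (by omega)]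

noncomputable def Dfun (n m : ℕ) (u : ℕ → ℝ) : Fin n → ℝ := fun j =>
  if (j:ℕ) + 1 ≤ m then (Real.sqrt (1 + u ((j:ℕ)+1) ^ 2))⁻¹
  else if (j:ℕ) + 1 = n then ∏ i ∈ Finset.Icc 1 m, Real.sqrt (1 + u i ^ 2)
  else 1

lemma ydagger_diag (n : ℕ) (u : ℕ → ℝ) :
    ∀ m, m < n → ydagger n m u = Matrix.diagonal (Dfun n m u) := by
  intro m
  induction m with
  | zero =>
      intro _
      have h : Dfun n 0 u = fun _ => (1:ℝ) := by
        funext j; simp only [Dfun]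
        rw [if_neg (by omega), Finset.Icc_eq_empty (by omega), Finset.prod_empty]
        split_ifs <;> rfl
      simp [ydagger, h]
  | succ m ih =>
      intro h
      rw [ydagger_succ, ih (by omega)]
      simp only [yhatE, Matrix.diagonal_mul_diagonal]
      rw [Matrix.diagonal_eq_diagonal_iff]
      intro j
      simp only [Dfun]
      by_cases hj1 : (j:ℕ) + 1 ≤ m
      · rw [if_pos hj1, if_neg (show ¬(j:ℕ)+1 = m+1 by omega),
          if_neg (show ¬(j:ℕ)+1 = n by omega), if_pos (show (j:ℕ)+1 ≤ m+1 by omega), mul_one]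
      · by_cases hj2 : (j:ℕ) + 1 = m + 1
        · rw [if_neg hj1, if_neg (show ¬(j:ℕ)+1 = n by omega), if_pos hj2,
            if_pos (show (j:ℕ)+1 ≤ m+1 by omega), one_mul, hj2]
        · by_cases hj3 : (j:ℕ) + 1 = n
          · rw [if_neg hj1, if_neg hj2, if_neg (show ¬(j:ℕ)+1 ≤ m+1 by omega),
              if_pos hj3, if_pos hj3, if_pos hj3, Finset.prod_Icc_succ_top (show 1 ≤ m+1 by omega)]
          · rw [if_neg hj1, if_neg hj2, if_neg (show ¬(j:ℕ)+1 ≤ m+1 by omega),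
              if_neg hj3, if_neg hj3, if_neg hj3, one_mul]

lemma kdagger_row (n : ℕ) (u : ℕ → ℝ) (r : Fin n) (hrn : (r:ℕ)+1 ≠ n) :
    ∀ m, m ≤ (r:ℕ) → ∀ b, kdagger n m u r b = if r = b then 1 else 0 := by
  intro m
  induction m with
  | zero => intro _ b; simp [kdagger, Matrix.one_apply]
  | succ m ih =>
      intro hm b
      rw [kdagger_succ, Matrix.mul_apply, Finset.sum_eq_single r]
      · rw [khatE_row (by omega) hrn, if_pos rfl, one_mul]; exact ih (by omega) b
      · intro c _ hc
        rw [khatE_row (by omega) hrn, if_neg (fun h : r = c => hc h.symm), zero_mul]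
      · intro h; exact absurd (Finset.mem_univ r) h

section xeval
variable {n m : ℕ} {u : ℕ → ℝ} {a b : Fin n}

lemma xdagger_diag (h : a = b) : xdagger n m u a b = 1 := by
  simp only [xdagger, Matrix.of_apply]; rw [if_pos h]

lemma xdagger_upper (h1 : (a:ℕ) < (b:ℕ)) (h2 : (b:ℕ)+1 ≤ m) :
    xdagger n m u a b = -(u ((a:ℕ)+1) * u ((b:ℕ)+1))
      * ∏ l ∈ Finset.Icc ((a:ℕ)+1) (b:ℕ), (Real.sqrt (1 + u l ^ 2))⁻¹ := by
  simp only [xdagger, Matrix.of_apply]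
  rw [if_neg (show ¬ a = b by intro h; subst h; omega), if_pos ⟨h1, h2⟩]

lemma xdagger_lastcol (h1 : (b:ℕ)+1 = n) (h2 : (a:ℕ)+1 ≤ m) (hmn : m < n) :
    xdagger n m u a b = u ((a:ℕ)+1) * (∏ j ∈ Finset.Icc 1 m, (Real.sqrt (1 + u j ^ 2))⁻¹)
      * ∏ j ∈ Finset.Icc ((a:ℕ)+1) m, (Real.sqrt (1 + u j ^ 2))⁻¹ := by
  simp only [xdagger, Matrix.of_apply]
  rw [if_neg (show ¬ a = b by intro h; subst h; omega),
    if_neg (show ¬((a:ℕ) < (b:ℕ) ∧ (b:ℕ)+1 ≤ m) by omega), if_pos ⟨h1, h2⟩]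

lemma xdagger_zero (h0 : ¬ a = b) (h1 : ¬((a:ℕ) < (b:ℕ) ∧ (b:ℕ)+1 ≤ m))
    (h2 : ¬((b:ℕ)+1 = n ∧ (a:ℕ)+1 ≤ m)) : xdagger n m u a b = 0 := by
  simp only [xdagger, Matrix.of_apply]
  rw [if_neg h0, if_neg h1, if_neg h2]

lemma Dfun_low (h : (a:ℕ)+1 ≤ m) :
    Dfun n m u a = (Real.sqrt (1 + u ((a:ℕ)+1) ^ 2))⁻¹ := by
  simp only [Dfun]; rw [if_pos h]

lemma Dfun_top (h1 : ¬(a:ℕ)+1 ≤ m) (h2 : (a:ℕ)+1 = n) :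
    Dfun n m u a = ∏ i ∈ Finset.Icc 1 m, Real.sqrt (1 + u i ^ 2) := by
  simp only [Dfun]; rw [if_neg h1, if_pos h2]

lemma Dfun_one (h1 : ¬(a:ℕ)+1 ≤ m) (h2 : ¬(a:ℕ)+1 = n) : Dfun n m u a = 1 := by
  simp only [Dfun]; rw [if_neg h1, if_neg h2]

end xeval

lemma mul_khatE' (n i : ℕ) (h1 : 1 ≤ i) (h2 : i < n) (x : ℝ) (M : Matrix (Fin n) (Fin n) ℝ)
    (q p : Fin n) (hq : (q:ℕ)+1 = i) (hp : (p:ℕ)+1 = n) (a b : Fin n) :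
    (M * khatE n i x) a b =
      if (b:ℕ) + 1 = i then (M a q + x * M a p) * (Real.sqrt (1+x^2))⁻¹
      else if (b:ℕ) + 1 = n then (M a p - x * M a q) * (Real.sqrt (1+x^2))⁻¹
      else M a b := by
  have e1 : (⟨i-1, by omega⟩ : Fin n) = q := Fin.ext (by simp; omega)
  have e2 : (⟨n-1, by omega⟩ : Fin n) = p := Fin.ext (by simp; omega)
  rw [mul_khatE n i h1 h2, e1, e2]

open Matrix in
lemma key (n m : ℕ) (hm : m + 1 < n) (u : ℕ → ℝ) (p q : Fin n)
    (hp : (p:ℕ)+1 = n) (hq : (q:ℕ) = m) :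
    xdagger n (m+1) u * ydagger n (m+1) u * khatE n (m+1) (u (m+1)) =
      xdagger n m u * ydagger n m u +
        Matrix.of (fun a b => if a = p ∧ b = q then
          u (m+1) * ∏ j ∈ Finset.Icc 1 m, Real.sqrt (1 + u j ^ 2) else 0) := by
  have ht : Real.sqrt (1 + u (m+1) ^ 2) ≠ 0 := sqrtS_ne _
  have hts : Real.sqrt (1 + u (m+1) ^ 2) ^ 2 = 1 + u (m+1) ^ 2 := sqrtS_sq _
  have hPne : ∀ i j : ℕ, (∏ l ∈ Finset.Icc i j, Real.sqrt (1 + u l ^ 2)) ≠ 0 :=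
    fun i j => (Finset.prod_pos fun l _ => sqrtS_pos (u l)).ne'
  rw [ydagger_diag n u (m+1) hm, ydagger_diag n u m (by omega)]
  ext a b
  rw [mul_khatE' n (m+1) (by omega) hm (u (m+1)) _ q p (by omega) hp]
  simp only [Matrix.mul_diagonal, Matrix.add_apply, Matrix.of_apply]
  by_cases hb1 : (b:ℕ)+1 = m+1
  · rw [if_pos hb1, Dfun_low (show (q:ℕ)+1 ≤ m+1 by omega),
      Dfun_top (show ¬(p:ℕ)+1 ≤ m+1 by omega) hp,
      Dfun_one (show ¬(b:ℕ)+1 ≤ m by omega) (show ¬(b:ℕ)+1 = n by omega)]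
    by_cases ha1 : (a:ℕ)+1 ≤ m
    · rw [xdagger_upper (show (a:ℕ) < (q:ℕ) by omega) (show (q:ℕ)+1 ≤ m+1 by omega),
        xdagger_lastcol hp (show (a:ℕ)+1 ≤ m+1 by omega) (by omega),
        xdagger_zero (show ¬a = b by intro h; subst h; omega)
          (show ¬((a:ℕ) < (b:ℕ) ∧ (b:ℕ)+1 ≤ m) by omega)
          (show ¬((b:ℕ)+1 = n ∧ (a:ℕ)+1 ≤ m) by omega),
        if_neg (show ¬(a = p ∧ b = q) by rintro ⟨rfl, -⟩; omega)]
      simp only [hq]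
      rw [Finset.prod_Icc_succ_top (show (1:ℕ) ≤ m+1 by omega)
          (fun l => (Real.sqrt (1 + u l ^ 2))⁻¹),
        Finset.prod_Icc_succ_top (show (a:ℕ)+1 ≤ m+1 by omega)
          (fun l => (Real.sqrt (1 + u l ^ 2))⁻¹),
        Finset.prod_Icc_succ_top (show (1:ℕ) ≤ m+1 by omega)
          (fun l => Real.sqrt (1 + u l ^ 2))]
      simp only [Finset.prod_inv_distrib]
      field_simp
      ring
    · by_cases ha2 : (a:ℕ) = m
      · rw [xdagger_diag (show a = q from Fin.ext (by omega)),
          xdagger_lastcol hp (show (a:ℕ)+1 ≤ m+1 by omega) (by omega),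
          xdagger_diag (show a = b from Fin.ext (by omega)),
          if_neg (show ¬(a = p ∧ b = q) by rintro ⟨rfl, -⟩; omega)]
        simp only [hq, ha2]
        rw [Finset.Icc_self, Finset.prod_singleton,
          Finset.prod_Icc_succ_top (show (1:ℕ) ≤ m+1 by omega)
            (fun l => (Real.sqrt (1 + u l ^ 2))⁻¹),
          Finset.prod_Icc_succ_top (show (1:ℕ) ≤ m+1 by omega)
            (fun l => Real.sqrt (1 + u l ^ 2))]
        simp only [Finset.prod_inv_distrib]
        field_simp
        linear_combination (-1) * hts
      · by_cases ha3 : (a:ℕ)+1 = n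
        · rw [xdagger_zero (show ¬a = q by intro h; rw [h] at ha3; omega)
              (show ¬((a:ℕ) < (q:ℕ) ∧ (q:ℕ)+1 ≤ m+1) by omega)
              (show ¬((q:ℕ)+1 = n ∧ (a:ℕ)+1 ≤ m+1) by omega),
            xdagger_diag (show a = p from Fin.ext (by omega)),
            xdagger_zero (show ¬a = b by intro h; subst h; omega)
              (show ¬((a:ℕ) < (b:ℕ) ∧ (b:ℕ)+1 ≤ m) by omega)
              (show ¬((b:ℕ)+1 = n ∧ (a:ℕ)+1 ≤ m) by omega),
            if_pos ⟨show a = p from Fin.ext (by omega), show b = q from Fin.ext (by omega)⟩]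
          rw [Finset.prod_Icc_succ_top (show (1:ℕ) ≤ m+1 by omega)
            (fun l => Real.sqrt (1 + u l ^ 2))]
          field_simp
          ring
        · rw [xdagger_zero (show ¬a = q by intro h; rw [h] at ha2; omega)
              (show ¬((a:ℕ) < (q:ℕ) ∧ (q:ℕ)+1 ≤ m+1) by omega)
              (show ¬((q:ℕ)+1 = n ∧ (a:ℕ)+1 ≤ m+1) by omega),
            xdagger_zero (show ¬a = p by intro h; rw [h] at ha3; omega)
              (show ¬((a:ℕ) < (p:ℕ) ∧ (p:ℕ)+1 ≤ m+1) by omega)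
              (show ¬((p:ℕ)+1 = n ∧ (a:ℕ)+1 ≤ m+1) by omega),
            xdagger_zero (show ¬a = b by intro h; subst h; omega)
              (show ¬((a:ℕ) < (b:ℕ) ∧ (b:ℕ)+1 ≤ m) by omega)
              (show ¬((b:ℕ)+1 = n ∧ (a:ℕ)+1 ≤ m) by omega),
            if_neg (show ¬(a = p ∧ b = q) by rintro ⟨rfl, -⟩; omega)]
          ring
  · by_cases hb2 : (b:ℕ)+1 = n
    · rw [if_neg hb1, if_pos hb2, Dfun_low (show (q:ℕ)+1 ≤ m+1 by omega),
        Dfun_top (show ¬(p:ℕ)+1 ≤ m+1 by omega) hp,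
        Dfun_top (show ¬(b:ℕ)+1 ≤ m by omega) hb2]
      by_cases ha1 : (a:ℕ)+1 ≤ m
      · rw [xdagger_upper (show (a:ℕ) < (q:ℕ) by omega) (show (q:ℕ)+1 ≤ m+1 by omega),
          xdagger_lastcol hp (show (a:ℕ)+1 ≤ m+1 by omega) (by omega),
          xdagger_lastcol hb2 ha1 (by omega),
          if_neg (show ¬(a = p ∧ b = q) by rintro ⟨rfl, -⟩; omega)]
        simp only [hq]
        rw [Finset.prod_Icc_succ_top (show (1:ℕ) ≤ m+1 by omega)
            (fun l => (Real.sqrt (1 + u l ^ 2))⁻¹),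
          Finset.prod_Icc_succ_top (show (a:ℕ)+1 ≤ m+1 by omega)
            (fun l => (Real.sqrt (1 + u l ^ 2))⁻¹),
          Finset.prod_Icc_succ_top (show (1:ℕ) ≤ m+1 by omega)
            (fun l => Real.sqrt (1 + u l ^ 2))]
        simp only [Finset.prod_inv_distrib]
        field_simp
        linear_combination -u ((a:ℕ)+1) * hts
      · by_cases ha2 : (a:ℕ) = m
        · rw [xdagger_diag (show a = q from Fin.ext (by omega)),
            xdagger_lastcol hp (show (a:ℕ)+1 ≤ m+1 by omega) (by omega),
            xdagger_zero (show ¬a = b by intro h; subst h; omega)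
              (show ¬((a:ℕ) < (b:ℕ) ∧ (b:ℕ)+1 ≤ m) by omega)
              (show ¬((b:ℕ)+1 = n ∧ (a:ℕ)+1 ≤ m) by omega),
            if_neg (show ¬(a = p ∧ b = q) by rintro ⟨rfl, -⟩; omega)]
          simp only [hq, ha2]
          rw [Finset.Icc_self, Finset.prod_singleton,
            Finset.prod_Icc_succ_top (show (1:ℕ) ≤ m+1 by omega)
              (fun l => (Real.sqrt (1 + u l ^ 2))⁻¹),
            Finset.prod_Icc_succ_top (show (1:ℕ) ≤ m+1 by omega)
              (fun l => Real.sqrt (1 + u l ^ 2))]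
          simp only [Finset.prod_inv_distrib]
          field_simp
          ring
        · by_cases ha3 : (a:ℕ)+1 = n
          · rw [xdagger_zero (show ¬a = q by intro h; rw [h] at ha3; omega)
                (show ¬((a:ℕ) < (q:ℕ) ∧ (q:ℕ)+1 ≤ m+1) by omega)
                (show ¬((q:ℕ)+1 = n ∧ (a:ℕ)+1 ≤ m+1) by omega),
              xdagger_diag (show a = p from Fin.ext (by omega)),
              xdagger_diag (show a = b from Fin.ext (by omega)),
              if_neg (show ¬(a = p ∧ b = q) by rintro ⟨-, rfl⟩; omega)]
            rw [Finset.prod_Icc_succ_top (show (1:ℕ) ≤ m+1 by omega)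
              (fun l => Real.sqrt (1 + u l ^ 2))]
            field_simp
            ring
          · rw [xdagger_zero (show ¬a = q by intro h; rw [h] at ha2; omega)
                (show ¬((a:ℕ) < (q:ℕ) ∧ (q:ℕ)+1 ≤ m+1) by omega)
                (show ¬((q:ℕ)+1 = n ∧ (a:ℕ)+1 ≤ m+1) by omega),
              xdagger_zero (show ¬a = p by intro h; rw [h] at ha3; omega)
                (show ¬((a:ℕ) < (p:ℕ) ∧ (p:ℕ)+1 ≤ m+1) by omega)
                (show ¬((p:ℕ)+1 = n ∧ (a:ℕ)+1 ≤ m+1) by omega),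
              xdagger_zero (show ¬a = b by intro h; subst h; omega)
                (show ¬((a:ℕ) < (b:ℕ) ∧ (b:ℕ)+1 ≤ m) by omega)
                (show ¬((b:ℕ)+1 = n ∧ (a:ℕ)+1 ≤ m) by omega),
              if_neg (show ¬(a = p ∧ b = q) by rintro ⟨rfl, -⟩; omega)]
            ring
    · rw [if_neg hb1, if_neg hb2,
        if_neg (show ¬(a = p ∧ b = q) by rintro ⟨-, rfl⟩; omega)]
      by_cases hb3 : (b:ℕ)+1 ≤ m
      · rw [Dfun_low (show (b:ℕ)+1 ≤ m+1 by omega), Dfun_low hb3]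
        by_cases hab : a = b
        · rw [xdagger_diag hab, xdagger_diag hab]; ring
        · by_cases hlt : (a:ℕ) < (b:ℕ)
          · rw [xdagger_upper hlt (show (b:ℕ)+1 ≤ m+1 by omega), xdagger_upper hlt hb3]; ring
          · rw [xdagger_zero hab (show ¬((a:ℕ) < (b:ℕ) ∧ (b:ℕ)+1 ≤ m+1) by omega)
                (show ¬((b:ℕ)+1 = n ∧ (a:ℕ)+1 ≤ m+1) by omega),
              xdagger_zero hab (show ¬((a:ℕ) < (b:ℕ) ∧ (b:ℕ)+1 ≤ m) by omega)
                (show ¬((b:ℕ)+1 = n ∧ (a:ℕ)+1 ≤ m) by omega)]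
            ring
      · rw [Dfun_one (show ¬(b:ℕ)+1 ≤ m+1 by omega) (show ¬(b:ℕ)+1 = n by omega),
          Dfun_one hb3 hb2]
        by_cases hab : a = b
        · rw [xdagger_diag hab, xdagger_diag hab]; ring
        · rw [xdagger_zero hab (show ¬((a:ℕ) < (b:ℕ) ∧ (b:ℕ)+1 ≤ m+1) by omega)
              (show ¬((b:ℕ)+1 = n ∧ (a:ℕ)+1 ≤ m+1) by omega),
            xdagger_zero hab (show ¬((a:ℕ) < (b:ℕ) ∧ (b:ℕ)+1 ≤ m) by omega)
              (show ¬((b:ℕ)+1 = n ∧ (a:ℕ)+1 ≤ m) by omega)]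
          ring

lemma bottomRow_zero (n : ℕ) (u : ℕ → ℝ) : bottomRow n 0 u = 1 := by
  ext a b
  simp only [bottomRow, Matrix.of_apply, Matrix.one_apply]
  rw [if_neg (show ¬((a:ℕ)+1 = n ∧ (b:ℕ)+1 ≤ 0) by omega)]

lemma xdagger_zero' (n : ℕ) (u : ℕ → ℝ) : xdagger n 0 u = 1 := by
  ext a b
  simp only [xdagger, Matrix.of_apply, Matrix.one_apply]
  rw [if_neg (show ¬((a:ℕ) < (b:ℕ) ∧ (b:ℕ)+1 ≤ 0) by omega),
    if_neg (show ¬((b:ℕ)+1 = n ∧ (a:ℕ)+1 ≤ 0) by omega)]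

lemma ydagger_zero' (n : ℕ) (u : ℕ → ℝ) : ydagger n 0 u = 1 := by simp [ydagger]

lemma kdagger_zero' (n : ℕ) (u : ℕ → ℝ) : kdagger n 0 u = 1 := by simp [kdagger]

lemma bottomRow_succ (n m : ℕ) (hm : m + 1 < n) (u : ℕ → ℝ) (p q : Fin n)
    (hp : (p:ℕ)+1 = n) (hq : (q:ℕ) = m) :
    bottomRow n (m+1) u = bottomRow n m u +
      Matrix.of (fun a b => if a = p ∧ b = q then
        u (m+1) * ∏ j ∈ Finset.Icc 1 m, Real.sqrt (1 + u j ^ 2) else 0) := by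
  ext a b
  simp only [bottomRow, Matrix.of_apply, Matrix.add_apply]
  by_cases hab : a = b
  · rw [if_pos hab, if_pos hab,
      if_neg (show ¬(a = p ∧ b = q) by rintro ⟨rfl, rfl⟩; rw [hab] at hp; omega)]
    ring
  · rw [if_neg hab, if_neg hab]
    by_cases h1 : (a:ℕ)+1 = n ∧ (b:ℕ)+1 ≤ m+1
    · by_cases h2 : (b:ℕ)+1 ≤ m
      · rw [if_pos ⟨h1.1, by omega⟩, if_pos ⟨h1.1, h2⟩,
          if_neg (show ¬(a = p ∧ b = q) by rintro ⟨-, rfl⟩; omega)]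
        ring
      · have hb : (b:ℕ) = m := by omega
        rw [if_pos h1, if_neg (show ¬((a:ℕ)+1 = n ∧ (b:ℕ)+1 ≤ m) by omega),
          if_pos ⟨show a = p from Fin.ext (by omega), show b = q from Fin.ext (by omega)⟩, hb]
        ring
    · rw [if_neg h1, if_neg (show ¬((a:ℕ)+1 = n ∧ (b:ℕ)+1 ≤ m) by omega),
        if_neg (show ¬(a = p ∧ b = q) by rintro ⟨rfl, rfl⟩; omega)]
      ring

open Matrix in
lemma E_mul_kdagger (n m : ℕ) (hm : m + 1 < n) (u : ℕ → ℝ) (p q : Fin n)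
    (hp : (p:ℕ)+1 = n) (hq : (q:ℕ) = m) (v : ℝ) :
    Matrix.of (fun a b => if a = p ∧ b = q then v else 0) * kdagger n m u =
      Matrix.of (fun a b => if a = p ∧ b = q then v else 0) := by
  ext a b
  rw [Matrix.mul_apply, Finset.sum_eq_single q]
  · simp only [Matrix.of_apply]
    by_cases hap : a = p
    · have hcond : a = p ∧ q = q := ⟨hap, rfl⟩
      rw [if_pos (⟨hap, trivial⟩ : a = p ∧ True), kdagger_row n u q (by omega) m (by omega) b]
      by_cases hbq : b = q
      · rw [if_pos hbq.symm, if_pos ⟨hap, hbq⟩, mul_one]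
      · rw [if_neg (fun h : q = b => hbq h.symm), if_neg (fun h : a = p ∧ b = q => hbq h.2), mul_zero]
    · rw [if_neg (fun h => hap h.1), if_neg (fun h => hap h.1), zero_mul]
  · intro c _ hcq
    simp only [Matrix.of_apply]
    rw [if_neg (fun h : a = p ∧ c = q => hcq h.2), zero_mul]
  · intro h; exact absurd (Finset.mem_univ q) h

set_option maxHeartbeats 2000000 in
open Matrix in
lemma main_decomp (n : ℕ) (u : ℕ → ℝ) :
    ∀ m, m < n → bottomRow n m u = xdagger n m u * ydagger n m u * kdagger n m u := by
  intro m
  induction m with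
  | zero =>
      intro _
      rw [bottomRow_zero, xdagger_zero', ydagger_zero', kdagger_zero']
      simp
  | succ m ih =>
      intro h
      have hpq : ((⟨n-1, by omega⟩ : Fin n) : ℕ) + 1 = n := by simp; omega
      have hq : ((⟨m, by omega⟩ : Fin n) : ℕ) = m := rfl
      have hih := ih (by omega)
      have hkey := key n m h u ⟨n-1, by omega⟩ ⟨m, by omega⟩ hpq hq
      have e2 := E_mul_kdagger n m h u ⟨n-1, by omega⟩ ⟨m, by omega⟩ hpq hq
        (u (m+1) * ∏ j ∈ Finset.Icc 1 m, Real.sqrt (1 + u j ^ 2))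
      conv_rhs => rw [kdagger_succ, ← Matrix.mul_assoc, hkey, Matrix.add_mul, e2]
      exact (bottomRow_succ n m h u ⟨n-1, by omega⟩ ⟨m, by omega⟩ hpq hq).trans
        (congrArg (· + (Matrix.of fun a b =>
          if a = (⟨n-1, by omega⟩ : Fin n) ∧ b = (⟨m, by omega⟩ : Fin n) then
            u (m+1) * ∏ j ∈ Finset.Icc 1 m, Real.sqrt (1 + u j ^ 2) else 0)) hih)

lemma Dfun_pos (n m : ℕ) (u : ℕ → ℝ) (a : Fin n) : 0 < Dfun n m u a := by
  unfold Dfun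
  split_ifs
  · exact inv_pos.2 (sqrtS_pos _)
  · exact Finset.prod_pos fun i _ => sqrtS_pos _
  · exact one_pos


/-- For `1 ≤ n' < n` and `u ∈ ℝ^{n'}`: the Iwasawa decomposition
`L = x†·y†·k†` holds, `y†` is diagonal with positive diagonal entries, and `k†` is
orthogonal. -/
theorem stmt_4 (n n' : ℕ) (h1 : 1 ≤ n') (h2 : n' < n) (u : ℕ → ℝ) :
    bottomRow n n' u = xdagger n n' u * ydagger n n' u * kdagger n n' u
    ∧ (∀ a b : Fin n, a ≠ b → ydagger n n' u a b = 0)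
    ∧ (∀ a : Fin n, 0 < ydagger n n' u a a)
    ∧ (kdagger n n' u).transpose * kdagger n n' u = 1 := by
  refine ⟨main_decomp n u n' h2, ?_, ?_, kdagger_orth n u n' h2⟩
  · intro a b hab
    rw [ydagger_diag n u n' h2]
    exact Matrix.diagonal_apply_ne _ hab
  · intro a
    rw [ydagger_diag n u n' h2, Matrix.diagonal_apply_eq]
    exact Dfun_pos n n' u a
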